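/- Under the assumptions of the previous limit, the imaginary part of the hyperbolic eigenvalue satisfies lim_{η→η̄} Im ν±(ξ)/a₁²(η) = (γ²/2κ)·D²|ξ|²/(C² + |ξ|²D²) > 0 for each fixed |ξ| ≠ 0; in particular Im ν±(ξ) vanishes to the same order as a₁²(η) as η → η̄. -/

import Mathlib

open Filter Complex Topology

lemma aux_im_lim {ι : Type*} (l : Filter ι) [l.NeBot]
    (R : ℝ) (hR : 0 < R) (κ₁ a₁ : ι → ℝ) (ha₁0 : ∀ n, a₁ n ≠ 0)
    (ν : ι → ℂ) (rb : ℝ) (hrb : rb ≠ 0)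
    (hν : Tendsto ν l (nhds (rb : ℂ)))
    (z : ℂ) (hz : z ≠ 0)
    (hlim : Tendsto
      (fun n => ((R * a₁ n : ℝ) : ℂ) ^ 2 / (ν n ^ 2 - (R ^ 2 * κ₁ n : ℝ)))
      l (nhds z)) :
    Tendsto (fun n => (ν n).im / a₁ n ^ 2) l
      (nhds (R ^ 2 * (z⁻¹).im / (2 * rb))) := by
  set g : ι → ℂ := fun n => ((R * a₁ n : ℝ) : ℂ) ^ 2 / (ν n ^ 2 - (R ^ 2 * κ₁ n : ℝ)) with hg
  have hg0 : ∀ᶠ n in l, g n ≠ 0 := hlim.eventually_ne hz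
  have hreT : Tendsto (fun n => (ν n).re) l (nhds rb) := by
    have := (Complex.continuous_re.tendsto ((rb : ℝ) : ℂ)).comp hν
    simpa [Function.comp_def] using this
  have hre0 : ∀ᶠ n in l, (ν n).re ≠ 0 := hreT.eventually_ne hrb
  have heq : ∀ᶠ n in l,
      (ν n).im / a₁ n ^ 2 = R ^ 2 * ((g n)⁻¹).im / (2 * (ν n).re) := by
    filter_upwards [hg0, hre0] with n hgn hren
    have hRa : R * a₁ n ≠ 0 := mul_ne_zero hR.ne' (ha₁0 n)
    have hN : ((R * a₁ n : ℝ) : ℂ) ^ 2 ≠ 0 :=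
      pow_ne_zero _ (by exact_mod_cast hRa)
    have hd : ν n ^ 2 - ((R ^ 2 * κ₁ n : ℝ) : ℂ) ≠ 0 := by
      intro h
      exact hgn (by simp only [hg]; rw [h, div_zero])
    have hinv : (g n)⁻¹ = (ν n ^ 2 - ((R ^ 2 * κ₁ n : ℝ) : ℂ)) / ((R * a₁ n : ℝ) : ℂ) ^ 2 := by
      rw [hg]; exact inv_div _ _
    have h1 : ν n ^ 2 = ((R ^ 2 * κ₁ n : ℝ) : ℂ) + ((R * a₁ n : ℝ) : ℂ) ^ 2 * (g n)⁻¹ := by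
      rw [hinv, mul_div_cancel₀ _ hN]; ring
    have h2 := congrArg Complex.im h1
    have h3 : (ν n ^ 2).im = 2 * (ν n).re * (ν n).im := by
      rw [sq]; simp [Complex.mul_im]; ring
    have h4 : (((R * a₁ n : ℝ) : ℂ) ^ 2 * (g n)⁻¹).im = (R * a₁ n) ^ 2 * ((g n)⁻¹).im := by
      simp [pow_two, Complex.mul_im, Complex.mul_re]
    rw [h3, Complex.add_im, Complex.ofReal_im, h4, zero_add] at h2
    rw [div_eq_div_iff (pow_ne_zero 2 (ha₁0 n)) (by simpa using hren : (2 : ℝ) * (ν n).re ≠ 0)]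
    linear_combination h2
  have hT : Tendsto (fun n => R ^ 2 * ((g n)⁻¹).im / (2 * (ν n).re)) l
      (nhds (R ^ 2 * (z⁻¹).im / (2 * rb))) := by
    have hginv : Tendsto (fun n => (g n)⁻¹) l (nhds z⁻¹) := hlim.inv₀ hz
    have himT : Tendsto (fun n => ((g n)⁻¹).im) l (nhds (z⁻¹).im) :=
      (Complex.continuous_im.tendsto _).comp hginv
    exact (tendsto_const_nhds.mul himT).div (tendsto_const_nhds.mul hreT)
      (by simpa using hrb)
  exact Filter.Tendsto.congr' (Filter.EventuallyEq.symm heq) hT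

/-- The imaginary part of the hyperbolic eigenvalue satisfies
`Im ν±(ξ)/a₁²(η) → (γ²/2κ)·D²|ξ|²/(C² + |ξ|²D²) > 0` as `η → η̄`, so it vanishes
to the same order as `a₁²(η)`. -/
theorem hyperbolic_eigenvalue_imaginary_part
    {ι : Type*} (l : Filter ι) [l.NeBot]
    (κ γ R : ℝ) (hκ : 0 < κ) (hγ : γ ≠ 0) (hR : 0 < R)
    (κ₁ κ₂ a₁ a₂ : ι → ℝ) (κ₁b κ₂b : ℝ)
    (hκ₁b : 0 < κ₁b) (hκ₂b : 0 < κ₂b) (hnd : κ₁b ≠ κ₂b)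
    (hκ₁ : Tendsto κ₁ l (nhds κ₁b)) (hκ₂ : Tendsto κ₂ l (nhds κ₂b))
    (hsum : ∀ n, a₁ n ^ 2 + a₂ n ^ 2 = 1)
    (ha₁0 : ∀ n, a₁ n ≠ 0)
    (ha₁ : Tendsto a₁ l (nhds 0))
    (νp νm : ι → ℂ)
    (hνp : Tendsto νp l (nhds ((R * Real.sqrt κ₁b : ℝ) : ℂ)))
    (hνm : Tendsto νm l (nhds ((-(R * Real.sqrt κ₁b) : ℝ) : ℂ)))
    (C D : ℝ)
    (hC : γ ^ 2 * C = 1 - γ ^ 2 / (κ₁b - κ₂b))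
    (hD : γ ^ 2 * D = κ / Real.sqrt κ₁b)
    (hlimp : Tendsto
      (fun n => ((R * a₁ n : ℝ) : ℂ) ^ 2 / (νp n ^ 2 - (R ^ 2 * κ₁ n : ℝ)))
      l (nhds ((C : ℂ) - I * D * R)))
    (hlimm : Tendsto
      (fun n => ((R * a₁ n : ℝ) : ℂ) ^ 2 / (νm n ^ 2 - (R ^ 2 * κ₁ n : ℝ)))
      l (nhds ((C : ℂ) + I * D * R)))
    (L : ℝ)
    (hL : L = γ ^ 2 / (2 * κ) * (D ^ 2 * R ^ 2 / (C ^ 2 + R ^ 2 * D ^ 2))) :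
    0 < L ∧
    Tendsto (fun n => (νp n).im / a₁ n ^ 2) l (nhds L) ∧
    Tendsto (fun n => (νm n).im / a₁ n ^ 2) l (nhds L) := by
  set s : ℝ := Real.sqrt κ₁b with hsdef
  have hs : 0 < s := Real.sqrt_pos.2 hκ₁b
  have hg2 : 0 < γ ^ 2 := lt_of_le_of_ne (sq_nonneg γ) (Ne.symm (pow_ne_zero 2 hγ))
  have hDval : D = (κ / s) / γ ^ 2 := by
    rw [eq_div_iff hg2.ne']; linear_combination hD
  have hDpos : 0 < D := by
    rw [hDval]; exact div_pos (div_pos hκ hs) hg2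
  have hden : 0 < C ^ 2 + R ^ 2 * D ^ 2 :=
    lt_add_of_le_of_pos (sq_nonneg C) (mul_pos (pow_pos hR 2) (pow_pos hDpos 2))
  have hL0 : 0 < L := by
    rw [hL]
    exact mul_pos (div_pos hg2 (by linarith))
      (div_pos (mul_pos (pow_pos hDpos 2) (pow_pos hR 2)) hden)
  have key : γ ^ 2 * D * s = κ := by
    rw [hD]; field_simp
  have hzp : ((C : ℂ) - I * D * R) ≠ 0 := by
    intro h
    have h2 := congrArg Complex.im h
    simp [Complex.mul_im, Complex.mul_re] at h2
    rcases h2 with h2 | h2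
    · exact hDpos.ne' h2
    · exact hR.ne' h2
  have hzm : ((C : ℂ) + I * D * R) ≠ 0 := by
    intro h
    have h2 := congrArg Complex.im h
    simp [Complex.mul_im, Complex.mul_re] at h2
    rcases h2 with h2 | h2
    · exact hDpos.ne' h2
    · exact hR.ne' h2
  have himp : ((((C : ℂ) - I * D * R))⁻¹).im = D * R / (C ^ 2 + R ^ 2 * D ^ 2) := by
    rw [Complex.inv_im]
    simp [Complex.normSq_apply, Complex.mul_im, Complex.mul_re]
    ring_nf
  have himm : ((((C : ℂ) + I * D * R))⁻¹).im = -(D * R) / (C ^ 2 + R ^ 2 * D ^ 2) := by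
    rw [Complex.inv_im]
    simp [Complex.normSq_apply, Complex.mul_im, Complex.mul_re]
    ring_nf
  have Hp := aux_im_lim l R hR κ₁ a₁ ha₁0 νp (R * s) (mul_pos hR hs).ne' hνp
    ((C : ℂ) - I * D * R) hzp hlimp
  have Hm := aux_im_lim l R hR κ₁ a₁ ha₁0 νm (-(R * s))
    (neg_ne_zero.2 (mul_pos hR hs).ne') hνm ((C : ℂ) + I * D * R) hzm hlimm
  have hvp : R ^ 2 * ((((C : ℂ) - I * D * R))⁻¹).im / (2 * (R * s)) = L := by
    rw [himp, hL]
    field_simp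
    linear_combination (-1 : ℝ) * key
  have hvm : R ^ 2 * ((((C : ℂ) + I * D * R))⁻¹).im / (2 * -(R * s)) = L := by
    rw [himm, hL]
    field_simp
    linear_combination (-1 : ℝ) * key
  refine ⟨hL0, ?_, ?_⟩
  · rw [← hvp]; exact Hp
  · rw [← hvm]; exact Hm
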